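/- Let G be a metacyclic p-group with p an odd prime. Then the Chermak-Delgado lattice CD(G) equals the interval [G/Z(G)] = {H : Z(G) ≤ H ≤ G}. -/

import Mathlib

noncomputable def mCD {G : Type*} [Group G] (H : Subgroup G) : ℕ :=
  Nat.card H * Nat.card (Subgroup.centralizer (H : Set G))

noncomputable def mStar (G : Type*) [Group G] : ℕ :=
  sSup (Set.range fun H : Subgroup G => mCD H)

noncomputable def CD (G : Type*) [Group G] : Set (Subgroup G) :=
  {H | mCD H = mStar G}

noncomputable def deltaCD (G : Type*) [Group G] : ℕ :=
  Nat.card {H : Subgroup G // H ∉ CD G}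

namespace CDAux

open Subgroup

/-! ### Number theory helpers -/

variable {p : ℕ}

lemma nt_dvd (hp : p.Prime) {n : ℕ} (hn : n ≠ 0) {k : ℕ} :
    p ^ k ∣ n ↔ k ≤ padicValNat p n := by
  rw [← Nat.factorization_def n hp]
  exact Nat.Prime.pow_dvd_iff_le_factorization hp hn

lemma nt1 (hp : p.Prime) {s : ℕ} (hs : s ≠ 0) (m i : ℕ) :
    p ^ m ∣ i * s ↔ p ^ (m - min m (padicValNat p s)) ∣ i := by
  rcases eq_or_ne i 0 with rfl | hi
  · simp
  · rw [nt_dvd hp (Nat.mul_ne_zero hi hs), nt_dvd hp hi,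
      padicValNat.mul (p := p) hi hs (hp := ⟨hp⟩)]
    omega

lemma nt2 (hp : p.Prime) {s : ℕ} (hs : s ≠ 0) (m X : ℕ) :
    (∃ x : ℕ, x * s ≡ X [MOD p ^ m]) ↔ p ^ min m (padicValNat p s) ∣ X := by
  set w := min m (padicValNat p s) with hw
  constructor
  · rintro ⟨x, hx⟩
    have h1 : x * s ≡ X [MOD p ^ w] := hx.of_dvd (pow_dvd_pow _ (min_le_left _ _))
    have h2 : p ^ w ∣ x * s :=
      dvd_mul_of_dvd_right ((pow_dvd_pow _ (min_le_right _ _)).trans pow_padicValNat_dvd) _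
    exact (Nat.modEq_zero_iff_dvd).mp (h1.symm.trans ((Nat.modEq_zero_iff_dvd).mpr h2))
  · intro hX
    rcases le_or_gt m (padicValNat p s) with hms | hms
    · -- w = m, p^m ∣ s ∣ anything needed : take x = 0
      refine ⟨0, ?_⟩
      rw [zero_mul]
      have : p ^ m ∣ X := by rw [hw, min_eq_left hms] at hX; exact hX
      exact ((Nat.modEq_zero_iff_dvd).mpr this).symm
    · -- w = v s < m
      have hwv : w = padicValNat p s := min_eq_right hms.le
      set vs := padicValNat p s with hvs
      set u := s / p ^ vs with hu
      have hsu : s = p ^ vs * u := (Nat.ordProj_mul_ordCompl_eq_self s p).symm ▸ by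
        rw [hu, hvs, ← Nat.factorization_def s hp]
      have hpu : ¬ p ∣ u := by
        rw [hu, hvs, ← Nat.factorization_def s hp]
        exact Nat.not_dvd_ordCompl hp hs
      have hK : 1 < p ^ (m - vs) := Nat.one_lt_pow (by omega) hp.one_lt
      obtain ⟨u', -, hu'⟩ := Nat.exists_mul_mod_eq_one_of_coprime
        (Nat.Coprime.pow_right _ ((Nat.Prime.coprime_iff_not_dvd hp).mpr hpu).symm) hK
      -- u * u' ≡ 1 [MOD p^(m-vs)]
      have huu' : u * u' ≡ 1 [MOD p ^ (m - vs)] := by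
        unfold Nat.ModEq
        rw [hu', Nat.mod_eq_of_lt hK]
      obtain ⟨X', hX'⟩ : p ^ vs ∣ X := by rw [hw, min_eq_right hms.le] at hX; exact hX
      refine ⟨X' * u', ?_⟩
      -- (X' * u') * s = p^vs * (X' * (u * u'))
      have key : X' * u' * s = p ^ vs * (X' * (u * u')) := by rw [hsu]; ring
      have : p ^ vs * (X' * (u * u')) ≡ p ^ vs * (X' * 1) [MOD p ^ vs * p ^ (m - vs)] :=
        (huu'.mul_left X').mul_left' _
      rw [key, hX']
      have hpm : p ^ vs * p ^ (m - vs) = p ^ m := by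
        rw [← pow_add]; congr 1; omega
      rw [hpm] at this
      simpa using this

lemma nt3 (hp : p.Prime) {t σ x : ℕ} (hσ : σ ≠ 0) (hdvd : p ^ x ∣ t * σ) :
    p ^ (x - padicValNat p σ) ∣ t := by
  rcases eq_or_ne t 0 with rfl | ht
  · simp
  · rw [nt_dvd hp (Nat.mul_ne_zero ht hσ), padicValNat.mul (p := p) ht hσ (hp := ⟨hp⟩)] at hdvd
    rw [nt_dvd hp ht]
    omega


/-! ### Group helpers -/

variable {G : Type*} [Group G]

lemma mem_zpowers_nat [Finite G] {x y : G} (h : y ∈ zpowers x) : ∃ i : ℕ, y = x ^ i := by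
  obtain ⟨z, hz⟩ := mem_zpowers_iff.mp h
  have hM : (0 : ℤ) < (orderOf x : ℤ) := by exact_mod_cast orderOf_pos x
  refine ⟨(z % (orderOf x : ℤ)).toNat, ?_⟩
  rw [← hz, ← zpow_natCast, Int.toNat_of_nonneg (Int.emod_nonneg z hM.ne'), zpow_mod_orderOf]

lemma card_zpowers_pow [Finite G] (hp : p.Prime) {x : G} {r : ℕ} (hx : orderOf x = p ^ r)
    {k : ℕ} (hk : k ≤ r) : Nat.card (zpowers (x ^ p ^ k)) = p ^ (r - k) := by
  rw [Nat.card_zpowers, orderOf_pow, hx, Nat.gcd_eq_right (pow_dvd_pow p hk),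
    Nat.pow_div hk hp.pos]

lemma exists_pow_eq (hp : p.Prime) [Finite G] {x : G} {r : ℕ} (hx : orderOf x = p ^ r)
    {i : ℕ} (hi : i ≠ 0) : ∃ k : ℕ, (x ^ i) ^ k = x ^ p ^ min r (padicValNat p i) := by
  obtain ⟨k, hk⟩ := (nt2 hp hi r (p ^ min r (padicValNat p i))).mpr dvd_rfl
  refine ⟨k, ?_⟩
  rw [← pow_mul, pow_eq_pow_iff_modEq, hx]
  simpa [mul_comm] using hk

lemma eq_zpowers_of (hp : p.Prime) [Finite G] {x : G} {r : ℕ} (hx : orderOf x = p ^ r)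
    (S : Subgroup G) (k : ℕ) (hmem : x ^ p ^ k ∈ S) (hdvd : ∀ i : ℕ, x ^ i ∈ S → p ^ k ∣ i)
    (hle : ∀ s ∈ S, s ∈ zpowers x) : S = zpowers (x ^ p ^ k) := by
  refine le_antisymm ?_ (zpowers_le.mpr hmem)
  intro s hs
  obtain ⟨i, rfl⟩ := mem_zpowers_nat (hle s hs)
  obtain ⟨d, rfl⟩ := hdvd i hs
  rw [pow_mul]
  exact Subgroup.pow_mem _ (Subgroup.mem_zpowers _) d

lemma card_inf_mul_map [Finite G] (N K : Subgroup G) [N.Normal] :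
    Nat.card K = Nat.card (K ⊓ N : Subgroup G) *
      Nat.card (K.map (QuotientGroup.mk' N)) := by
  set φ := (QuotientGroup.mk' N).comp K.subtype with hφ
  have h1 : Nat.card K = Nat.card (K ⧸ φ.ker) * Nat.card φ.ker :=
    Subgroup.card_eq_card_quotient_mul_card_subgroup φ.ker
  have h2 : Nat.card (K ⧸ φ.ker) = Nat.card (K.map (QuotientGroup.mk' N)) := by
    rw [Nat.card_congr (QuotientGroup.quotientKerEquivRange φ).toEquiv]
    congr 1
    rw [hφ, MonoidHom.range_comp, Subgroup.range_subtype]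
  have h3 : φ.ker = (K ⊓ N).subgroupOf K := by
    rw [hφ, ← MonoidHom.comap_ker, QuotientGroup.ker_mk', Subgroup.inf_subgroupOf_left]
    rfl
  have h4 : Nat.card φ.ker = Nat.card (K ⊓ N : Subgroup G) := by
    rw [h3]
    exact Nat.card_congr (Subgroup.subgroupOfEquivOfLe inf_le_left).toEquiv
  rw [h1, h2, h4, mul_comm]

/-! ### Glue: reduction to the constant-measure statement -/

lemma centralizer_sup_center (K : Subgroup G) :
    Subgroup.centralizer ((K ⊔ Subgroup.center G : Subgroup G) : Set G)
      = Subgroup.centralizer (K : Set G) := by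
  refine le_antisymm (Subgroup.centralizer_le (by exact_mod_cast SetLike.coe_subset_coe.mpr le_sup_left)) ?_
  intro x hx
  rw [Subgroup.mem_centralizer_iff]
  intro g hg
  have : K ⊔ Subgroup.center G ≤ Subgroup.centralizer {x} := by
    refine sup_le ?_ (Subgroup.center_le_centralizer _)
    intro k hk
    rw [Subgroup.mem_centralizer_iff]
    intro y hy
    rw [Set.mem_singleton_iff] at hy
    subst hy
    exact (Subgroup.mem_centralizer_iff.mp hx k hk).symm
  have := this hg
  rw [Subgroup.mem_centralizer_iff] at this
  exact (this x rfl).symm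

lemma subgroup_eq_of_le_of_card_le [Finite G] {H K : Subgroup G} (h : H ≤ K)
    (hc : Nat.card K ≤ Nat.card H) : H = K := by
  have h1 : (H : Set G) ⊆ (K : Set G) := h
  have h2 : (K : Set G).ncard ≤ (H : Set G).ncard := by
    rwa [← Nat.card_coe_set_eq, ← Nat.card_coe_set_eq]
  exact SetLike.coe_injective (Set.eq_of_subset_of_ncard_le h1 h2 (Set.toFinite _)).symm
    |>.symm ▸ rfl

lemma glue [Finite G] (V : ℕ)
    (hV : ∀ H : Subgroup G, Subgroup.center G ≤ H → mCD H = V) :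
    CD G = {H : Subgroup G | Subgroup.center G ≤ H} := by
  have hble : ∀ K : Subgroup G, mCD K ≤ V := by
    intro K
    have h1 : mCD (K ⊔ Subgroup.center G) = V := hV _ le_sup_right
    calc mCD K = Nat.card K *
        Nat.card (Subgroup.centralizer ((K ⊔ Subgroup.center G : Subgroup G) : Set G)) := by
          rw [mCD, centralizer_sup_center]
      _ ≤ Nat.card (K ⊔ Subgroup.center G : Subgroup G) *
        Nat.card (Subgroup.centralizer ((K ⊔ Subgroup.center G : Subgroup G) : Set G)) :=
          Nat.mul_le_mul_right _ (Subgroup.card_le_of_le le_sup_left)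
      _ = V := h1
  have hVrange : V ∈ Set.range fun H : Subgroup G => mCD H := ⟨⊤, hV ⊤ le_top⟩
  have hstar : mStar G = V := by
    refine le_antisymm (csSup_le ⟨_, hVrange⟩ ?_) (le_csSup ⟨V, ?_⟩ hVrange)
    · rintro _ ⟨K, rfl⟩; exact hble K
    · rintro _ ⟨K, rfl⟩; exact hble K
  ext H
  simp only [CD, Set.mem_setOf_eq, hstar]
  constructor
  · intro hH
    have h1 : mCD (H ⊔ Subgroup.center G) = V := hV _ le_sup_right
    rw [mCD, centralizer_sup_center] at h1
    rw [mCD] at hH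
    have hpos : 0 < Nat.card (Subgroup.centralizer (H : Set G)) := Nat.card_pos
    have hcard : Nat.card H = Nat.card (H ⊔ Subgroup.center G : Subgroup G) :=
      Nat.eq_of_mul_eq_mul_right hpos (hH.trans h1.symm)
    have := subgroup_eq_of_le_of_card_le (le_sup_left : H ≤ H ⊔ Subgroup.center G) hcard.ge
    exact le_sup_right.trans_eq this.symm
  · exact hV H

end CDAux

namespace CDAux

open Subgroup

/-- helper: cancel common summand in ModEq -/
lemma modeq_cancel {M A k : ℕ} : A ≡ A + k [MOD M] ↔ M ∣ k := by
  rw [Nat.modEq_iff_dvd' (Nat.le_add_right _ _)]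
  simp

lemma dvd_of_modeq {d n j j₂ : ℕ} (hdn : d ∣ n) (hj₂ : d ∣ j₂) (h : j ≡ j₂ [MOD n]) : d ∣ j := by
  have h1 : j ≡ j₂ [MOD d] := h.of_dvd hdn
  have h2 : j₂ ≡ 0 [MOD d] := (Nat.modEq_zero_iff_dvd).mpr hj₂
  exact (Nat.modEq_zero_iff_dvd).mp (h1.trans h2)

lemma star_iff {M i t E : ℕ} (hE : 1 ≤ E) :
    t + i * E ≡ i + t [MOD M] ↔ M ∣ i * (E - 1) := by
  have h2 : t + i * E = (i + t) + i * (E - 1) := by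
    calc t + i * E = t + i * ((E - 1) + 1) := by rw [Nat.sub_add_cancel hE]
      _ = (i + t) + i * (E - 1) := by ring
  rw [h2]
  constructor
  · intro h
    exact modeq_cancel.mp h.symm
  · intro h
    exact (modeq_cancel.mpr h).symm

lemma star2_iff {M i t E F : ℕ} (hE : 1 ≤ E) (hF : 1 ≤ F) :
    t + i * E ≡ i + t * F [MOD M] ↔ i * (E - 1) ≡ t * (F - 1) [MOD M] := by
  have h1 : t + i * E = (t + i) + i * (E - 1) := by
    calc t + i * E = t + i * ((E - 1) + 1) := by rw [Nat.sub_add_cancel hE]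
      _ = (t + i) + i * (E - 1) := by ring
  have h2 : i + t * F = (t + i) + t * (F - 1) := by
    calc i + t * F = i + t * ((F - 1) + 1) := by rw [Nat.sub_add_cancel hF]
      _ = (t + i) + t * (F - 1) := by ring
  rw [h1, h2]
  exact ⟨fun h => Nat.ModEq.add_left_cancel' _ h, fun h => (Nat.ModEq.add_left _ h : _)⟩

lemma modeq_mul_of_dvd {M P E : ℕ} (hE : 1 ≤ E) (h : M ∣ P * (E - 1)) :
    P * E ≡ P [MOD M] := by
  have h2 : P * E = P + P * (E - 1) := by
    calc P * E = P * ((E - 1) + 1) := by rw [Nat.sub_add_cancel hE]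
      _ = P + P * (E - 1) := by ring
  rw [h2]
  exact (modeq_cancel.mpr h).symm

lemma modeq_mul_to_dvd {M P E : ℕ} (hE : 1 ≤ E) (h : P * E ≡ P [MOD M]) :
    M ∣ P * (E - 1) := by
  have h2 : P * E = P + P * (E - 1) := by
    calc P * E = P * ((E - 1) + 1) := by rw [Nat.sub_add_cancel hE]
      _ = P + P * (E - 1) := by ring
  rw [h2] at h
  exact modeq_cancel.mp h.symm

lemma key {p : ℕ} [Fact p.Prime] (hp : Odd p) {G : Type*} [Group G] [Finite G]
    (hG : IsPGroup p G) (a b : G) [hN : (Subgroup.zpowers a).Normal]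
    (hb : ∀ g : G ⧸ Subgroup.zpowers a,
      g ∈ Subgroup.zpowers ((QuotientGroup.mk' (Subgroup.zpowers a)) b))
    (H : Subgroup G) (hZH : Subgroup.center G ≤ H) :
    mCD H = Nat.card G * Nat.card (Subgroup.center G) := by
  classical
  have hp' : p.Prime := Fact.out
  set N := Subgroup.zpowers a with hNdef
  set π := QuotientGroup.mk' N with hπdef
  set q := π b with hqdef
  have hker : ∀ x : G, π x = 1 ↔ x ∈ N := fun x => QuotientGroup.eq_one_iff x
  have hπa : π a = 1 := (hker a).mpr (mem_zpowers a)
  have hπform : ∀ i j : ℕ, π (a ^ i * b ^ j) = q ^ j := by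
    intro i j
    rw [map_mul, map_pow, map_pow, hπa, one_pow, one_mul]
  have hnf : ∀ g : G, ∃ i j : ℕ, g = a ^ i * b ^ j := by
    intro g
    obtain ⟨j, hj⟩ := mem_zpowers_nat (hb (π g))
    have h1 : π (g * (b ^ j)⁻¹) = 1 := by
      rw [map_mul, map_inv, map_pow, ← hqdef, ← hj, mul_inv_cancel]
    obtain ⟨i, hi⟩ := mem_zpowers_nat ((hker _).mp h1)
    exact ⟨i, j, by rw [← hi]; group⟩
  by_cases hab : a * b = b * a
  · -- abelian case
    have hCab : Commute a b := hab
    have hcomm : ∀ x y : G, x * y = y * x := by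
      intro x y
      obtain ⟨i, j, rfl⟩ := hnf x
      obtain ⟨i', j', rfl⟩ := hnf y
      exact Commute.mul_left
        (Commute.mul_right ((Commute.refl a).pow_pow i i') ((hCab.pow_pow i j').symm.symm))
        (Commute.mul_right ((hCab.symm.pow_pow j i')) ((Commute.refl b).pow_pow j j'))
    have hZtop : Subgroup.center G = ⊤ := by
      rw [eq_top_iff]
      intro x _
      rw [Subgroup.mem_center_iff]
      intro g
      exact hcomm g x
    have hHtop : H = ⊤ := le_antisymm le_top (hZtop ▸ hZH)
    subst hHtop
    rw [mCD, Subgroup.coe_top, Subgroup.centralizer_univ, Subgroup.card_top]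
  · -- nonabelian case
    obtain ⟨m, hM⟩ := IsPGroup.iff_orderOf.mp hG a
    have hQp : IsPGroup p (G ⧸ N) := IsPGroup.to_quotient hG N
    obtain ⟨n, hn⟩ := IsPGroup.iff_orderOf.mp hQp q
    obtain ⟨e, he⟩ := mem_zpowers_nat (hN.conj_mem a (mem_zpowers a) b)
    have ha1 : a ≠ 1 := by
      intro h
      exact hab (by rw [h, one_mul, mul_one])
    have hm1 : 1 ≤ m := by
      rcases Nat.eq_zero_or_pos m with h | h
      · exact absurd (orderOf_eq_one_iff.mp (by rw [hM, h, pow_zero])) ha1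
      · exact h
    have hba1 : b * a = a ^ e * b := by rw [← he]; group
    have L1 : ∀ x j : ℕ, b ^ j * a ^ x = a ^ (x * e ^ j) * b ^ j := by
      have hbax : ∀ x : ℕ, b * a ^ x = a ^ (x * e) * b := by
        intro x
        induction x with
        | zero => simp
        | succ x ihx =>
          calc b * a ^ (x + 1) = b * a ^ x * a := by rw [pow_succ, mul_assoc]
            _ = a ^ (x * e) * (b * a) := by rw [ihx, mul_assoc]
            _ = a ^ (x * e) * a ^ e * b := by rw [hba1, mul_assoc]
            _ = a ^ ((x + 1) * e) * b := by rw [← pow_add]; congr 1; ring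
      intro x j
      induction j generalizing x with
      | zero => simp
      | succ j ih =>
        have hexp : x * e * e ^ j = x * e ^ (j + 1) := by rw [pow_succ]; ring
        calc b ^ (j + 1) * a ^ x = b ^ j * (b * a ^ x) := by
              rw [pow_succ, mul_assoc]
          _ = b ^ j * (a ^ (x * e) * b) := by rw [hbax]
          _ = (a ^ (x * e * e ^ j) * b ^ j) * b := by rw [← mul_assoc, ih]
          _ = a ^ (x * e ^ (j + 1)) * b ^ (j + 1) := by
              rw [mul_assoc, ← pow_succ, hexp]
    have L3 : ∀ i j i' j' : ℕ,
        (a ^ i * b ^ j) * (a ^ i' * b ^ j') = a ^ (i + i' * e ^ j) * b ^ (j + j') := by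
      intro i j i' j'
      calc (a ^ i * b ^ j) * (a ^ i' * b ^ j') = a ^ i * (b ^ j * a ^ i') * b ^ j' := by group
        _ = a ^ i * (a ^ (i' * e ^ j) * b ^ j) * b ^ j' := by rw [L1]
        _ = (a ^ i * a ^ (i' * e ^ j)) * (b ^ j * b ^ j') := by group
        _ = a ^ (i + i' * e ^ j) * b ^ (j + j') := by rw [← pow_add, ← pow_add]
    have CANCEL : ∀ X Y K : ℕ, a ^ X * b ^ K = a ^ Y * b ^ K ↔ X ≡ Y [MOD p ^ m] := by
      intro X Y K
      rw [mul_left_inj, pow_eq_pow_iff_modEq, hM]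
    have he2 : 2 ≤ e := by
      rcases Nat.lt_or_ge e 2 with h | h
      · interval_cases e
        · exfalso
          apply ha1
          have h1 : a = b⁻¹ * (b * a * b⁻¹) * b := by group
          rw [he, pow_zero] at h1
          rw [h1]; group
        · exfalso
          rw [pow_one] at he
          exact hab (mul_inv_eq_iff_eq_mul.mp he).symm
      · exact h
    have hen : e ^ p ^ n ≡ 1 [MOD p ^ m] := by
      have hqn : q ^ p ^ n = 1 := by rw [← hn]; exact pow_orderOf_eq_one q
      have hbn : b ^ p ^ n ∈ N := (hker _).mp (by rw [map_pow]; exact hqn)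
      obtain ⟨ρ, hρ⟩ := mem_zpowers_nat hbn
      have h1 : b ^ p ^ n * a ^ 1 = a ^ (1 * e ^ p ^ n) * b ^ p ^ n := L1 1 (p ^ n)
      rw [hρ, ← pow_add, ← pow_add] at h1
      have h2 := pow_eq_pow_iff_modEq.mp h1
      rw [hM] at h2
      have h3 : ρ + 1 ≡ ρ + 1 * e ^ p ^ n [MOD p ^ m] := by
        calc ρ + 1 ≡ 1 * e ^ p ^ n + ρ [MOD p ^ m] := h2
          _ = ρ + 1 * e ^ p ^ n := by ring
      have h4 := (Nat.ModEq.add_left_cancel' ρ h3 : (1 : ℕ) ≡ 1 * e ^ p ^ n [MOD p ^ m])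
      simpa using h4.symm
    have hene0 : e ^ p ^ n - 1 ≠ 0 := by
      have : 1 < e ^ p ^ n := Nat.one_lt_pow (pow_pos hp'.pos n).ne' (by omega)
      omega
    have hpe : p ∣ e - 1 := by
      have h1 : e ^ p ^ n ≡ 1 [MOD p] := hen.of_dvd (dvd_pow_self p (by omega))
      have h2 : ((e : ZMod p)) ^ p ^ n = 1 := by
        have := (ZMod.natCast_eq_natCast_iff _ _ _).mpr h1
        push_cast at this
        exact this
      have h3 : ∀ k : ℕ, (e : ZMod p) ^ p ^ k = (e : ZMod p) := by
        intro k
        induction k with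
        | zero => simp
        | succ k ih => rw [pow_succ, pow_mul, ih, ZMod.pow_card]
      have h4 : (e : ZMod p) = 1 := by rw [← h3 n, h2]
      have h5 : e ≡ 1 [MOD p] := by
        have := (ZMod.natCast_eq_natCast_iff e 1 p).mp (by push_cast; exact h4)
        exact this
      exact (Nat.modEq_iff_dvd' (by omega)).mp h5.symm
    have hpne : ¬ p ∣ e := by
      intro h
      have h1 : p ∣ e - (e - 1) := Nat.dvd_sub h hpe
      rw [show e - (e - 1) = 1 by omega] at h1
      exact absurd (Nat.dvd_one.mp h1) hp'.ne_one
    set ve := padicValNat p (e - 1) with hvedef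
    have LTE : ∀ J : ℕ, J ≠ 0 → padicValNat p (e ^ J - 1) = ve + padicValNat p J := by
      intro J hJ
      have := padicValNat.pow_sub_pow (p := p) hp (x := e) (y := 1)
        (by omega) (by simpa using hpe) hpne hJ
      simpa using this
    have hvem : ve < m := by
      by_contra hcon
      push_neg at hcon
      have h1 : p ^ m ∣ e - 1 := (nt_dvd hp' (by omega)).mpr hcon
      have h2 : e ≡ 1 [MOD p ^ m] := ((Nat.modEq_iff_dvd' (by omega)).mpr h1).symm
      have h3 : a ^ e = a ^ 1 := by rw [pow_eq_pow_iff_modEq, hM]; exact h2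
      apply hab
      have h4 : b * a = a * b := by rw [hba1, h3]; group
      exact h4.symm
    set c := m - ve with hcdef
    have hvec : ve + c = m := by omega
    have hc1 : 1 ≤ c := by omega
    have hcn : c ≤ n := by
      have h1 : p ^ m ∣ e ^ p ^ n - 1 :=
        (Nat.modEq_iff_dvd' (Nat.one_le_pow _ _ (by omega))).mp hen.symm
      have h3 := (nt_dvd hp' hene0).mp h1
      rw [LTE _ (pow_pos hp'.pos n).ne', padicValNat.prime_pow] at h3
      omega
    have hcm : c ≤ m := by omega
    have hEone : ∀ J : ℕ, 1 ≤ e ^ J := fun J => Nat.one_le_pow _ _ (by omega)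
    have hene' : ∀ K : ℕ, e ^ p ^ K - 1 ≠ 0 := by
      intro K
      have : 1 < e ^ p ^ K := Nat.one_lt_pow (pow_pos hp'.pos K).ne' (by omega)
      omega
    have hvpow : ∀ K : ℕ, padicValNat p (e ^ p ^ K - 1) = ve + K := by
      intro K
      rw [LTE _ (pow_pos hp'.pos K).ne', padicValNat.prime_pow]
    have hcen : ∀ x : G, Commute a x → Commute b x → x ∈ Subgroup.center G := by
      intro x h1 h2
      rw [Subgroup.mem_center_iff]
      intro g
      obtain ⟨i, j, rfl⟩ := hnf g
      exact Commute.mul_left (h1.pow_left i) (h2.pow_left j)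
    have hapc : a ^ p ^ c ∈ Subgroup.center G := by
      apply hcen
      · exact (Commute.refl a).pow_right _
      · have h1 : b ^ 1 * a ^ p ^ c = a ^ (p ^ c * e ^ 1) * b ^ 1 := L1 _ 1
        rw [pow_one, pow_one] at h1
        have h2 : a ^ (p ^ c * e) = a ^ p ^ c := by
          rw [pow_eq_pow_iff_modEq, hM]
          apply modeq_mul_of_dvd (by omega)
          rw [nt_dvd hp' (Nat.mul_ne_zero (pow_pos hp'.pos c).ne' (by omega)),
            padicValNat.mul (pow_pos hp'.pos c).ne' (by omega), padicValNat.prime_pow]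
          omega
        rw [h2] at h1
        exact h1
    have hbpc : b ^ p ^ c ∈ Subgroup.center G := by
      apply hcen
      · have h1 : b ^ p ^ c * a ^ 1 = a ^ (1 * e ^ p ^ c) * b ^ p ^ c := L1 1 _
        have h2 : a ^ (1 * e ^ p ^ c) = a ^ 1 := by
          rw [pow_eq_pow_iff_modEq, hM, one_mul]
          have hd : p ^ m ∣ e ^ p ^ c - 1 := by
            rw [nt_dvd hp' (hene' c), hvpow c]
            omega
          exact ((Nat.modEq_iff_dvd' (hEone _)).mpr hd).symm
        rw [h2, pow_one] at h1
        exact h1.symm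
      · exact (Commute.refl b).pow_right _
    -- the center computations
    have hZN : Subgroup.center G ⊓ N = zpowers (a ^ p ^ c) := by
      apply eq_zpowers_of hp' hM _ c
      · exact Subgroup.mem_inf.mpr ⟨hapc, Subgroup.pow_mem _ (mem_zpowers a) _⟩
      · intro i hi
        have h1 := Subgroup.mem_center_iff.mp (Subgroup.mem_inf.mp hi).1 b
        have h2 : b ^ 1 * a ^ i = a ^ (i * e ^ 1) * b ^ 1 := L1 i 1
        rw [pow_one, pow_one] at h2
        rw [h1] at h2
        have h3 : a ^ (i * e) = a ^ i := by
          have := h2.symm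
          rwa [mul_left_inj] at this
        have h4 : p ^ m ∣ i * (e - 1) :=
          modeq_mul_to_dvd (by omega) (by rw [pow_eq_pow_iff_modEq, hM] at h3; exact h3)
        have h5 := (nt1 hp' (by omega : e - 1 ≠ 0) m i).mp h4
        have h6 : m - min m (padicValNat p (e - 1)) = c := by
          rw [← hvedef]; omega
        rwa [h6] at h5
      · exact fun s hs => (Subgroup.mem_inf.mp hs).2
    haveI : Finite (G ⧸ N) := Quotient.finite _
    have hZQ : (Subgroup.center G).map π = zpowers (q ^ p ^ c) := by
      apply eq_zpowers_of hp' hn _ c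
      · exact ⟨b ^ p ^ c, hbpc, by rw [map_pow]⟩
      · rintro j ⟨z, hzZ, hπz⟩
        obtain ⟨i, j₂, rfl⟩ := hnf z
        have hq2 : q ^ j₂ = q ^ j := by rw [← hπform i j₂, hπz]
        have hza := Subgroup.mem_center_iff.mp hzZ a
        -- a * z = z * a
        have hL : (a ^ i * b ^ j₂) * (a ^ 1 * b ^ 0) = a ^ (i + 1 * e ^ j₂) * b ^ (j₂ + 0) :=
          L3 i j₂ 1 0
        have hR : (a ^ 1 * b ^ 0) * (a ^ i * b ^ j₂) = a ^ (1 + i * e ^ 0) * b ^ (0 + j₂) :=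
          L3 1 0 i j₂
        simp only [pow_zero, mul_one, pow_one, zero_add, add_zero, one_mul] at hL hR
        have heq : a ^ (1 + i) * b ^ j₂ = a ^ (i + e ^ j₂) * b ^ j₂ := by
          rw [← hR, hza, hL]
        have hmod := (CANCEL _ _ j₂).mp heq
        have hdvd2 : p ^ c ∣ j₂ := by
          rcases eq_or_ne j₂ 0 with rfl | hj2
          · exact dvd_zero _
          · have h6 : p ^ m ∣ 1 * (e ^ j₂ - 1) :=
              (star_iff (hEone j₂)).mp (by simpa [one_mul] using hmod.symm)
            have hne : e ^ j₂ - 1 ≠ 0 := by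
              have : 1 < e ^ j₂ := Nat.one_lt_pow hj2 (by omega)
              omega
            rw [one_mul, nt_dvd hp' hne, LTE _ hj2] at h6
            exact dvd_trans (pow_dvd_pow p (by omega : c ≤ padicValNat p j₂))
              pow_padicValNat_dvd
        refine dvd_of_modeq (pow_dvd_pow p hcn) hdvd2 ?_
        have := (pow_eq_pow_iff_modEq.mp hq2).symm
        rwa [hn] at this
      · exact fun s _ => hb s
    have hcardZ : Nat.card (Subgroup.center G) = p ^ (m - c) * p ^ (n - c) := by
      rw [card_inf_mul_map N (Subgroup.center G), hZN, hZQ,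
        card_zpowers_pow hp' hM hcm, card_zpowers_pow hp' hn hcn]
    have hcardG : Nat.card G = p ^ m * p ^ n := by
      have h1 := card_inf_mul_map N (⊤ : Subgroup G)
      rw [Subgroup.card_top, top_inf_eq,
        Subgroup.map_top_of_surjective _ (QuotientGroup.mk'_surjective N),
        Subgroup.card_top] at h1
      have h2 : zpowers q = ⊤ := (Subgroup.eq_top_iff' _).mpr hb
      have h3 : Nat.card (zpowers q) = Nat.card (G ⧸ N) := by
        rw [h2]; exact Subgroup.card_top
      rw [h1, Nat.card_zpowers, hM, ← h3, Nat.card_zpowers, hn]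
    -- the subgroup H : invariants α and β
    have hPm : a ^ p ^ m ∈ H := by
      rw [← hM, pow_orderOf_eq_one]
      exact one_mem H
    have hexα : ∃ k, a ^ p ^ k ∈ H := ⟨m, hPm⟩
    set α := Nat.find hexα with hαdef
    have hαH : a ^ p ^ α ∈ H := Nat.find_spec hexα
    have hαm : α ≤ m := Nat.find_min' hexα hPm
    have hαc : α ≤ c := Nat.find_min' hexα (hZH hapc)
    have hHNdvd : ∀ i : ℕ, a ^ i ∈ H → p ^ α ∣ i := by
      intro i hi
      rcases eq_or_ne i 0 with rfl | hi0
      · exact dvd_zero _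
      · obtain ⟨k, hk⟩ := exists_pow_eq hp' hM hi0
        have h1 : a ^ p ^ min m (padicValNat p i) ∈ H := by
          rw [← hk]; exact Subgroup.pow_mem _ hi _
        have h2 : α ≤ min m (padicValNat p i) := Nat.find_min' hexα h1
        exact dvd_trans (pow_dvd_pow p (le_trans h2 (min_le_right _ _)))
          pow_padicValNat_dvd
    have hHN : H ⊓ N = zpowers (a ^ p ^ α) := by
      apply eq_zpowers_of hp' hM _ α
      · exact Subgroup.mem_inf.mpr ⟨hαH, Subgroup.pow_mem _ (mem_zpowers a) _⟩
      · exact fun i hi => hHNdvd i (Subgroup.mem_inf.mp hi).1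
      · exact fun s hs => (Subgroup.mem_inf.mp hs).2
    have hexβ : ∃ k, ∃ x ∈ H, π x = q ^ p ^ k := by
      refine ⟨n, 1, one_mem H, ?_⟩
      rw [map_one, ← hn, pow_orderOf_eq_one]
    set β := Nat.find hexβ with hβdef
    obtain ⟨x₀, hx₀H, hx₀π⟩ := Nat.find_spec hexβ
    have hβn : β ≤ n := Nat.find_min' hexβ ⟨1, one_mem H, by rw [map_one, ← hn, pow_orderOf_eq_one]⟩
    have hβc : β ≤ c := Nat.find_min' hexβ ⟨b ^ p ^ c, hZH hbpc, by rw [map_pow]⟩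
    -- the generator h = a^t * b^(p^β)
    have hx₀N : x₀ * (b ^ p ^ β)⁻¹ ∈ N := by
      apply (hker _).mp
      rw [map_mul, map_inv, map_pow, hx₀π, mul_inv_cancel]
    obtain ⟨t, ht⟩ := mem_zpowers_nat hx₀N
    have hhform : a ^ t * b ^ p ^ β = x₀ := by rw [← ht]; group
    have hhH : a ^ t * b ^ p ^ β ∈ H := hhform ▸ hx₀H
    have hπHdvd : ∀ j : ℕ, q ^ j ∈ H.map π → p ^ β ∣ j := by
      rintro j ⟨x, hxH, hπx⟩
      rcases eq_or_ne j 0 with rfl | hj0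
      · exact dvd_zero _
      · obtain ⟨k, hk⟩ := exists_pow_eq hp' hn hj0
        have h1 : ∃ y ∈ H, π y = q ^ p ^ min n (padicValNat p j) := by
          refine ⟨x ^ k, Subgroup.pow_mem _ hxH k, ?_⟩
          rw [map_pow, hπx, ← pow_mul]
          rw [← pow_mul] at hk
          exact hk
        have h2 : β ≤ min n (padicValNat p j) := Nat.find_min' hexβ h1
        exact dvd_trans (pow_dvd_pow p (le_trans h2 (min_le_right _ _)))
          pow_padicValNat_dvd
    have hπH : H.map π = zpowers (q ^ p ^ β) := by
      apply eq_zpowers_of hp' hn _ β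
      · exact ⟨x₀, hx₀H, hx₀π⟩
      · exact hπHdvd
      · exact fun s _ => hb s
    have hcardH : Nat.card H = p ^ (m - α) * p ^ (n - β) := by
      rw [card_inf_mul_map N H, hHN, hπH,
        card_zpowers_pow hp' hM hαm, card_zpowers_pow hp' hn hβn]
    set h₀ := a ^ t * b ^ p ^ β with hh₀def
    have hπh : π h₀ = q ^ p ^ β := hπform t _
    have hCgen : ∀ x : G, Commute (a ^ p ^ α) x → Commute h₀ x →
        x ∈ Subgroup.centralizer (H : Set G) := by
      intro x h1 h2
      rw [Subgroup.mem_centralizer_iff]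
      intro g hg
      obtain ⟨i, j, rfl⟩ := hnf g
      obtain ⟨u, hu⟩ := hπHdvd j ⟨a ^ i * b ^ j, hg, hπform i j⟩
      have hwH : (a ^ i * b ^ j) * (h₀⁻¹) ^ u ∈ H :=
        mul_mem hg (Subgroup.pow_mem _ (inv_mem hhH) u)
      have hwN : (a ^ i * b ^ j) * (h₀⁻¹) ^ u ∈ N := by
        apply (hker _).mp
        rw [map_mul, map_pow, map_inv, hπh, hπform i j, inv_pow, ← pow_mul, ← hu,
          mul_inv_cancel]
      have hwZ : (a ^ i * b ^ j) * (h₀⁻¹) ^ u ∈ H ⊓ N := Subgroup.mem_inf.mpr ⟨hwH, hwN⟩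
      rw [hHN] at hwZ
      obtain ⟨d, hd⟩ := mem_zpowers_iff.mp hwZ
      have hgw : a ^ i * b ^ j = ((a ^ p ^ α) ^ d) * h₀ ^ u := by
        rw [hd]; group
      rw [hgw]
      exact Commute.mul_left (h1.zpow_left d) (h2.pow_left u)
    have hCNdvd : ∀ i : ℕ, a ^ i ∈ Subgroup.centralizer (H : Set G) →
        p ^ (m - (ve + β)) ∣ i := by
      intro i hi
      have h1 := Subgroup.mem_centralizer_iff.mp hi _ hhH
      have hL := L3 t (p ^ β) i 0
      have hR := L3 i 0 t (p ^ β)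
      simp only [pow_zero, mul_one, one_mul, add_zero, zero_add] at hL hR
      have heq : a ^ (t + i * e ^ p ^ β) * b ^ p ^ β = a ^ (i + t) * b ^ p ^ β := by
        rw [← hL, h1, hR]
      have hmod := (CANCEL _ _ _).mp heq
      have h6 : p ^ m ∣ i * (e ^ p ^ β - 1) := (star_iff (hEone _)).mp hmod
      have h7 := (nt1 hp' (hene' β) m i).mp h6
      have h8 : m - min m (padicValNat p (e ^ p ^ β - 1)) = m - (ve + β) := by
        rw [hvpow β]
        omega
      rwa [h8] at h7
    have hCN : Subgroup.centralizer (H : Set G) ⊓ N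
        = zpowers (a ^ p ^ (m - (ve + β))) := by
      apply eq_zpowers_of hp' hM _ _
      · refine Subgroup.mem_inf.mpr
          ⟨hCgen _ ((Commute.refl a).pow_pow _ _) ?_, Subgroup.pow_mem _ (mem_zpowers a) _⟩
        have hL := L3 t (p ^ β) (p ^ (m - (ve + β))) 0
        have hR := L3 (p ^ (m - (ve + β))) 0 t (p ^ β)
        simp only [pow_zero, mul_one, one_mul, add_zero, zero_add] at hL hR
        have hmod : t + p ^ (m - (ve + β)) * e ^ p ^ β ≡ p ^ (m - (ve + β)) + t
            [MOD p ^ m] := by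
          apply (star_iff (hEone _)).mpr
          rw [nt_dvd hp' (Nat.mul_ne_zero (pow_pos hp'.pos _).ne' (hene' β)),
            padicValNat.mul (pow_pos hp'.pos _).ne' (hene' β), padicValNat.prime_pow, hvpow β]
          omega
        calc h₀ * a ^ p ^ (m - (ve + β))
            = a ^ (t + p ^ (m - (ve + β)) * e ^ p ^ β) * b ^ p ^ β := hL
          _ = a ^ (p ^ (m - (ve + β)) + t) * b ^ p ^ β := (CANCEL _ _ _).mpr hmod
          _ = a ^ p ^ (m - (ve + β)) * h₀ := hR.symm
      · exact fun i hi => hCNdvd i (Subgroup.mem_inf.mp hi).1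
      · exact fun s hs => (Subgroup.mem_inf.mp hs).2
    -- key divisibility coming from Z ≤ H
    set σ := ∑ l ∈ Finset.range (p ^ (c - β)), (e ^ p ^ β) ^ l with hσdef
    have hpowform : ∀ Kk : ℕ, h₀ ^ Kk
        = a ^ (t * ∑ l ∈ Finset.range Kk, (e ^ p ^ β) ^ l) * b ^ (p ^ β * Kk) := by
      intro Kk
      induction Kk with
      | zero => simp
      | succ Kk ih =>
        have hea : t * (∑ l ∈ Finset.range Kk, (e ^ p ^ β) ^ l) + t * e ^ (p ^ β * Kk)
            = t * ∑ l ∈ Finset.range (Kk + 1), (e ^ p ^ β) ^ l := by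
          rw [Finset.sum_range_succ, mul_add, ← pow_mul]
        have heb : p ^ β * Kk + p ^ β = p ^ β * (Kk + 1) := by ring
        rw [pow_succ, ih, hh₀def, L3, hea, heb]
    have htσ : p ^ α ∣ t * σ := by
      have h1 := hpowform (p ^ (c - β))
      have h2 : p ^ β * p ^ (c - β) = p ^ c := by
        rw [← pow_add]; congr 1; omega
      rw [h2, ← hσdef] at h1
      have h3 : a ^ (t * σ) = h₀ ^ p ^ (c - β) * (b ^ p ^ c)⁻¹ := by
        rw [h1]; group
      have h4 : a ^ (t * σ) ∈ H := by
        rw [h3]; exact mul_mem (Subgroup.pow_mem _ hhH _) (inv_mem (hZH hbpc))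
      exact hHNdvd _ h4
    have hgeom : σ * (e ^ p ^ β - 1) = e ^ p ^ c - 1 := by
      have h2 : ((e : ℤ) ^ p ^ β) ^ p ^ (c - β) = (e : ℤ) ^ p ^ c := by
        rw [← pow_mul]
        congr 1
        rw [← pow_add]
        congr 1
        omega
      have h1 : (σ : ℤ) * ((e : ℤ) ^ p ^ β - 1) = (e : ℤ) ^ p ^ c - 1 := by
        have hg := geom_sum_mul ((e : ℤ) ^ p ^ β) (p ^ (c - β))
        rw [h2] at hg
        rw [hσdef]
        push_cast
        exact hg
      have hc1' : (1 : ℤ) ≤ (e : ℤ) ^ p ^ β := by exact_mod_cast hEone (p ^ β)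
      have hc2' : (1 : ℤ) ≤ (e : ℤ) ^ p ^ c := by exact_mod_cast hEone (p ^ c)
      have : ((σ * (e ^ p ^ β - 1) : ℕ) : ℤ) = ((e ^ p ^ c - 1 : ℕ) : ℤ) := by
        push_cast [Nat.cast_sub (hEone (p ^ β)), Nat.cast_sub (hEone (p ^ c))]
        push_cast at h1
        linarith [h1]
      exact_mod_cast this
    have hσ0 : σ ≠ 0 := by
      intro h0
      rw [h0, zero_mul] at hgeom
      exact (hene' c) hgeom.symm
    have hvσ : padicValNat p σ = c - β := by
      have h1 : padicValNat p σ + padicValNat p (e ^ p ^ β - 1)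
          = padicValNat p (e ^ p ^ c - 1) := by
        rw [← padicValNat.mul hσ0 (hene' β), hgeom]
      rw [hvpow β, hvpow c] at h1
      omega
    have hT : p ^ (α - (c - β)) ∣ t := by
      have := nt3 hp' hσ0 htσ
      rwa [hvσ] at this
    -- image of the centralizer
    have hCπdvd : ∀ j : ℕ, q ^ j ∈ (Subgroup.centralizer (H : Set G)).map π →
        p ^ (c - α) ∣ j := by
      rintro j ⟨y, hyC, hπy⟩
      obtain ⟨i₁, j₁, rfl⟩ := hnf y
      have hq2 : q ^ j₁ = q ^ j := by rw [← hπform i₁ j₁, hπy]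
      have h1 := Subgroup.mem_centralizer_iff.mp hyC _ hαH
      have hL := L3 (p ^ α) 0 i₁ j₁
      have hR := L3 i₁ j₁ (p ^ α) 0
      simp only [pow_zero, mul_one, one_mul, add_zero, zero_add] at hL hR
      have heq : a ^ (p ^ α + i₁) * b ^ j₁ = a ^ (i₁ + p ^ α * e ^ j₁) * b ^ j₁ := by
        rw [← hL, h1, hR]
      have hmod := (CANCEL _ _ _).mp heq
      have hdvd1 : p ^ m ∣ p ^ α * (e ^ j₁ - 1) := (star_iff (hEone _)).mp hmod.symm
      have hj₁ : p ^ (c - α) ∣ j₁ := by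
        rcases eq_or_ne j₁ 0 with rfl | hj1
        · exact dvd_zero _
        · have hne : e ^ j₁ - 1 ≠ 0 := by
            have : 1 < e ^ j₁ := Nat.one_lt_pow hj1 (by omega)
            omega
          rw [nt_dvd hp' (Nat.mul_ne_zero (pow_pos hp'.pos α).ne' hne),
            padicValNat.mul (pow_pos hp'.pos α).ne' hne, padicValNat.prime_pow,
            LTE _ hj1] at hdvd1
          exact dvd_trans (pow_dvd_pow p (by omega : c - α ≤ padicValNat p j₁))
            pow_padicValNat_dvd
      refine dvd_of_modeq (pow_dvd_pow p (by omega : c - α ≤ n)) hj₁ ?_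
      have := (pow_eq_pow_iff_modEq.mp hq2).symm
      rwa [hn] at this
    have hCπ : (Subgroup.centralizer (H : Set G)).map π = zpowers (q ^ p ^ (c - α)) := by
      apply eq_zpowers_of hp' hn _ _
      · have hXdvd : p ^ min m (padicValNat p (e ^ p ^ β - 1))
            ∣ t * (e ^ p ^ (c - α) - 1) := by
          have h1 : p ^ (α - (c - β)) * p ^ (ve + (c - α)) ∣ t * (e ^ p ^ (c - α) - 1) := by
            apply mul_dvd_mul hT
            rw [nt_dvd hp' (hene' _), hvpow]
          refine dvd_trans (pow_dvd_pow p ?_) (by rwa [← pow_add] at h1)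
          rw [hvpow β]
          omega
        obtain ⟨i', hi'⟩ := (nt2 hp' (hene' β) m _).mpr hXdvd
        refine ⟨a ^ i' * b ^ p ^ (c - α), ?_, hπform _ _⟩
        apply hCgen
        · have hL := L3 (p ^ α) 0 i' (p ^ (c - α))
          have hR := L3 i' (p ^ (c - α)) (p ^ α) 0
          simp only [pow_zero, mul_one, one_mul, add_zero, zero_add] at hL hR
          have hmod : p ^ α + i' ≡ i' + p ^ α * e ^ p ^ (c - α) [MOD p ^ m] := by
            refine ((star_iff (hEone _)).mpr ?_).symm
            rw [nt_dvd hp' (Nat.mul_ne_zero (pow_pos hp'.pos α).ne' (hene' _)),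
              padicValNat.mul (pow_pos hp'.pos α).ne' (hene' _), padicValNat.prime_pow,
              hvpow]
            omega
          calc a ^ p ^ α * (a ^ i' * b ^ p ^ (c - α))
              = a ^ (p ^ α + i') * b ^ p ^ (c - α) := hL
            _ = a ^ (i' + p ^ α * e ^ p ^ (c - α)) * b ^ p ^ (c - α) :=
                (CANCEL _ _ _).mpr hmod
            _ = (a ^ i' * b ^ p ^ (c - α)) * a ^ p ^ α := hR.symm
        · have hL := L3 t (p ^ β) i' (p ^ (c - α))
          have hR := L3 i' (p ^ (c - α)) t (p ^ β)
          have hmod : t + i' * e ^ p ^ β ≡ i' + t * e ^ p ^ (c - α) [MOD p ^ m] :=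
            (star2_iff (hEone _) (hEone _)).mpr hi'
          calc h₀ * (a ^ i' * b ^ p ^ (c - α))
              = a ^ (t + i' * e ^ p ^ β) * b ^ (p ^ β + p ^ (c - α)) := hL
            _ = a ^ (i' + t * e ^ p ^ (c - α)) * b ^ (p ^ β + p ^ (c - α)) :=
                (CANCEL _ _ _).mpr hmod
            _ = a ^ (i' + t * e ^ p ^ (c - α)) * b ^ (p ^ (c - α) + p ^ β) := by
                rw [add_comm (p ^ β)]
            _ = (a ^ i' * b ^ p ^ (c - α)) * h₀ := hR.symm
      · exact hCπdvd
      · exact fun s _ => hb s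
    have hcardC : Nat.card (Subgroup.centralizer (H : Set G))
        = p ^ (m - (m - (ve + β))) * p ^ (n - (c - α)) := by
      rw [card_inf_mul_map N _, hCN, hCπ,
        card_zpowers_pow hp' hM (by omega), card_zpowers_pow hp' hn (by omega)]
    rw [mCD, hcardH, hcardC, hcardG, hcardZ]
    rw [show p ^ (m - α) * p ^ (n - β) * (p ^ (m - (m - (ve + β))) * p ^ (n - (c - α)))
        = p ^ ((m - α) + (n - β) + ((m - (m - (ve + β))) + (n - (c - α)))) by
      rw [pow_add, pow_add, pow_add]]
    rw [show p ^ m * p ^ n * (p ^ (m - c) * p ^ (n - c))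
        = p ^ (m + n + ((m - c) + (n - c))) by rw [pow_add, pow_add, pow_add]]
    congr 1
    omega

end CDAux

theorem stmt10 {p : ℕ} [Fact p.Prime] (hp : Odd p) {G : Type*} [Group G] [Finite G]
    (hG : IsPGroup p G)
    (hmeta : ∃ N : Subgroup G, ∃ _ : N.Normal, IsCyclic N ∧ IsCyclic (G ⧸ N)) :
    CD G = {H : Subgroup G | Subgroup.center G ≤ H} := by
  classical
  obtain ⟨N₀, hN₀, hNcyc, hQcyc⟩ := hmeta
  have hex : ∃ a : G, Subgroup.zpowers a = N₀ := by
    obtain ⟨g, hg⟩ := @IsCyclic.exists_generator _ _ hNcyc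
    refine ⟨g, le_antisymm (Subgroup.zpowers_le.mpr g.2) ?_⟩
    intro x hx
    obtain ⟨k, hk⟩ := Subgroup.mem_zpowers_iff.mp (hg ⟨x, hx⟩)
    refine Subgroup.mem_zpowers_iff.mpr ⟨k, ?_⟩
    have := congrArg Subtype.val hk
    push_cast at this
    exact_mod_cast this
  obtain ⟨a, hNa⟩ := hex
  subst hNa
  haveI : (Subgroup.zpowers a).Normal := hN₀
  obtain ⟨qg, hqg⟩ := @IsCyclic.exists_generator _ _ hQcyc
  have hout : (QuotientGroup.mk' (Subgroup.zpowers a)) qg.out = qg := by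
    exact QuotientGroup.out_eq' qg
  have hb : ∀ x : G ⧸ Subgroup.zpowers a,
      x ∈ Subgroup.zpowers ((QuotientGroup.mk' (Subgroup.zpowers a)) qg.out) := by
    intro x
    rw [hout]
    exact hqg x
  exact CDAux.glue _ (fun H hZH => CDAux.key hp hG a qg.out hb H hZH)
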